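/- arXiv:1307.0746 — 3 statements merged into one kernel-verified Lean document; each statement's English description precedes it below -/
import Mathlib

section
/- Let N ≥ 2. For every constant C > 0, the supremum of ∫_{ℝ^N} Φ(u(x)) dx over all compactly supported Lipschitz functions u : ℝ^N → ℝ satisfying ∫_{ℝ^N} |∇u(x)|^N dx ≤ 1 and ∫_{ℝ^N} |u(x)|^N dx ≤ C is equal to +∞ (here ∇u denotes the almost-everywhere defined gradient of the Lipschitz function u). -/
open MeasureTheory Real

/-- `ω_{N-1}`, the `(N-1)`-dimensional measure of the unit sphere in `ℝ^N`. -/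
noncomputable def sphereVol (N : ℕ) : ℝ :=
  N * Real.pi ^ ((N : ℝ) / 2) / Real.Gamma ((N : ℝ) / 2 + 1)

/-- `α_N := N ω_{N-1}^{1/(N-1)}`. -/
noncomputable def alphaMT (N : ℕ) : ℝ := N * sphereVol N ^ ((1 : ℝ) / ((N : ℝ) - 1))

/-- `Φ(t) := e^{α_N |t|^{N/(N-1)}} - ∑_{j=0}^{N-2} α_N^j |t|^{jN/(N-1)} / j!`. -/
noncomputable def PhiMT (N : ℕ) (t : ℝ) : ℝ :=
  Real.exp (alphaMT N * |t| ^ ((N : ℝ) / ((N : ℝ) - 1))) -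
    ∑ j ∈ Finset.range (N - 1),
      alphaMT N ^ j * |t| ^ ((j : ℝ) * N / ((N : ℝ) - 1)) / (Nat.factorial j : ℝ)

section MTAux

open Metric Set Filter

lemma sphereVol_pos {N : ℕ} (hN : 1 ≤ N) : 0 < sphereVol N := by
  have h1 : (0:ℝ) < N := by exact_mod_cast hN
  have h2 : 0 < Real.pi ^ ((N : ℝ) / 2) := Real.rpow_pos_of_pos Real.pi_pos _
  have h3 : 0 < Real.Gamma ((N : ℝ) / 2 + 1) := Real.Gamma_pos_of_pos (by positivity)
  exact div_pos (mul_pos h1 h2) h3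

lemma alphaMT_pos {N : ℕ} (hN : 1 ≤ N) : 0 < alphaMT N := by
  have h1 : (0:ℝ) < N := by exact_mod_cast hN
  exact mul_pos h1 (Real.rpow_pos_of_pos (sphereVol_pos hN) _)

lemma PhiMT_eq {N : ℕ} (hN : 2 ≤ N) {t : ℝ} (ht : 0 ≤ t) :
    PhiMT N t = Real.exp (alphaMT N * t ^ ((N:ℝ)/((N:ℝ)-1))) -
      ∑ j ∈ Finset.range (N-1),
        (alphaMT N * t ^ ((N:ℝ)/((N:ℝ)-1)))^j / (Nat.factorial j : ℝ) := by
  unfold PhiMT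
  rw [abs_of_nonneg ht]
  congr 1
  refine Finset.sum_congr rfl fun j _ => ?_
  rw [mul_pow, ← Real.rpow_natCast (t ^ ((N:ℝ)/((N:ℝ)-1))) j, ← Real.rpow_mul ht]
  congr 2
  ring

lemma PhiMT_abs {N : ℕ} (t : ℝ) : PhiMT N t = PhiMT N |t| := by
  unfold PhiMT; rw [abs_abs]

lemma PhiMT_nonneg {N : ℕ} (hN : 2 ≤ N) (t : ℝ) : 0 ≤ PhiMT N t := by
  rw [PhiMT_abs, PhiMT_eq hN (abs_nonneg t)]
  have hs : 0 ≤ alphaMT N * |t| ^ ((N:ℝ)/((N:ℝ)-1)) := by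
    have h := alphaMT_pos (N := N) (by omega)
    have h2 := Real.rpow_nonneg (abs_nonneg t) ((N:ℝ)/((N:ℝ)-1))
    nlinarith
  have := Real.sum_le_exp_of_nonneg hs (N-1)
  linarith

lemma PhiMT_zero {N : ℕ} (hN : 2 ≤ N) : PhiMT N 0 = 0 := by
  have hp : ((N:ℝ)/((N:ℝ)-1)) ≠ 0 := by
    have h1 : (2:ℝ) ≤ (N:ℝ) := by exact_mod_cast hN
    have h2 : (0:ℝ) < (N:ℝ)-1 := by linarith
    have : (0:ℝ) < (N:ℝ)/((N:ℝ)-1) := by positivity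
    exact this.ne'
  rw [PhiMT_eq hN le_rfl, Real.zero_rpow hp, mul_zero, Real.exp_zero]
  have : ∑ j ∈ Finset.range (N-1), (0:ℝ)^j / (Nat.factorial j : ℝ) = 1 := by
    rw [Finset.sum_eq_single 0]
    · simp
    · intro j _ hj; simp [zero_pow hj]
    · intro h; exact absurd (Finset.mem_range.mpr (by omega)) h
  rw [this]; ring

lemma PhiMT_continuous {N : ℕ} (hN : 2 ≤ N) : Continuous (PhiMT N) := by
  have h1 : (2:ℝ) ≤ (N:ℝ) := by exact_mod_cast hN
  have h2 : (0:ℝ) < (N:ℝ)-1 := by linarith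
  have hp : (0:ℝ) ≤ (N:ℝ)/((N:ℝ)-1) := by positivity
  unfold PhiMT
  refine Continuous.sub ?_ ?_
  · exact Real.continuous_exp.comp
      (continuous_const.mul (continuous_abs.rpow_const fun x => Or.inr hp))
  · refine continuous_finset_sum _ fun j _ => ?_
    have hpj : (0:ℝ) ≤ (j:ℝ) * N / ((N:ℝ)-1) := by positivity
    exact (continuous_const.mul (continuous_abs.rpow_const fun x => Or.inr hpj)).div_const _

/-- The truncated-logarithm radial profile. -/
noncomputable def mtphi (a ρ R r : ℝ) : ℝ :=
  a * (Real.log R - Real.log (max ρ (min R r)))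

/-- Moser-type function on `ℝ^N`. -/
noncomputable def mtu (N : ℕ) (a ρ R : ℝ) (x : EuclideanSpace ℝ (Fin N)) : ℝ :=
  mtphi a ρ R ‖x‖

variable {N : ℕ} {a ρ R : ℝ}

lemma mtphi_of_le (hρR : ρ ≤ R) {r : ℝ} (hr : r ≤ ρ) :
    mtphi a ρ R r = a * (Real.log R - Real.log ρ) := by
  unfold mtphi
  rw [min_eq_right (hr.trans hρR), max_eq_left hr]

lemma mtphi_of_ge (hρR : ρ ≤ R) {r : ℝ} (hr : R ≤ r) : mtphi a ρ R r = 0 := by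
  unfold mtphi
  rw [min_eq_left hr, max_eq_right hρR, sub_self, mul_zero]

lemma mtphi_of_mem {r : ℝ} (h1 : ρ ≤ r) (h2 : r ≤ R) :
    mtphi a ρ R r = a * (Real.log R - Real.log r) := by
  unfold mtphi
  rw [min_eq_right h2, max_eq_right h1]

lemma mtphi_continuous (hρ : 0 < ρ) : Continuous (mtphi a ρ R) := by
  unfold mtphi
  refine continuous_const.mul (Continuous.sub continuous_const ?_)
  have hclamp : Continuous fun r : ℝ => max ρ (min R r) :=
    continuous_const.max (continuous_const.min continuous_id)
  refine Real.continuousOn_log.comp_continuous hclamp fun r => ?_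
  have : ρ ≤ max ρ (min R r) := le_max_left _ _
  simp only [Set.mem_compl_iff, Set.mem_singleton_iff]
  exact (lt_of_lt_of_le hρ this).ne'

lemma mtphi_nonneg (ha : 0 ≤ a) (hρ : 0 < ρ) (hρR : ρ ≤ R) (r : ℝ) :
    0 ≤ mtphi a ρ R r := by
  unfold mtphi
  apply mul_nonneg ha
  rw [sub_nonneg]
  apply Real.log_le_log (lt_of_lt_of_le hρ (le_max_left _ _))
  exact max_le hρR (min_le_left _ _)


lemma mtu_lipschitz (ha : 0 < a) (hρ : 0 < ρ) (hρR : ρ ≤ R) :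
    ∃ K : NNReal, LipschitzWith K (mtu N a ρ R) := by
  have hρ' : (0:ℝ) ≤ ρ⁻¹ := by positivity
  have hlog : LipschitzOnWith ⟨ρ⁻¹, hρ'⟩ Real.log (Icc ρ R) := by
    apply (convex_Icc ρ R).lipschitzOnWith_of_nnnorm_hasDerivWithin_le
      (f' := fun y : ℝ => y⁻¹)
    · intro y hy
      exact (Real.hasDerivAt_log (lt_of_lt_of_le hρ hy.1).ne').hasDerivWithinAt
    · intro y hy
      refine NNReal.coe_le_coe.mp ?_
      simp only [coe_nnnorm, Real.norm_eq_abs, NNReal.coe_mk]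
      have hy0 : 0 < y := lt_of_lt_of_le hρ hy.1
      rw [abs_of_nonneg (by positivity : (0:ℝ) ≤ y⁻¹)]
      exact inv_anti₀ hρ hy.1
  have hclamp : LipschitzWith 1 (fun r : ℝ => max ρ (min R r)) :=
    (LipschitzWith.id.const_min R).const_max ρ
  have hmaps : ∀ r : ℝ, max ρ (min R r) ∈ Icc ρ R := fun r =>
    ⟨le_max_left _ _, max_le hρR (min_le_left _ _)⟩
  have h2 : LipschitzOnWith (⟨ρ⁻¹, hρ'⟩ * 1) (Real.log ∘ fun r : ℝ => max ρ (min R r)) univ :=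
    hlog.comp (lipschitzOnWith_univ.mpr hclamp) fun r _ => hmaps r
  have h2' := lipschitzOnWith_univ.mp h2
  have haff : LipschitzWith ‖a‖₊ (fun t : ℝ => a * (Real.log R - t)) := by
    apply LipschitzWith.of_dist_le_mul
    intro x y
    simp only [Real.dist_eq, coe_nnnorm, Real.norm_eq_abs]
    have h3 : a * (Real.log R - x) - a * (Real.log R - y) = a * (y - x) := by ring
    rw [h3, abs_mul, abs_sub_comm]
  refine ⟨‖a‖₊ * (⟨ρ⁻¹, hρ'⟩ * 1) * 1, ?_⟩
  have := (haff.comp h2').comp (lipschitzWith_one_norm (E := EuclideanSpace ℝ (Fin N)))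
  simp [Function.comp_def, mtu, mtphi] at this ⊢
  exact this

lemma mtu_hasCompactSupport (hρR : ρ ≤ R) : HasCompactSupport (mtu N a ρ R) := by
  apply HasCompactSupport.intro (isCompact_closedBall (0 : EuclideanSpace ℝ (Fin N)) R)
  intro x hx
  simp only [mem_closedBall, dist_zero_right, not_le] at hx
  exact mtphi_of_ge hρR hx.le

lemma mtu_continuous (hρ : 0 < ρ) : Continuous (mtu N a ρ R) :=
  (mtphi_continuous hρ).comp continuous_norm

lemma mtu_fderiv_small (hρR : ρ ≤ R) {x : EuclideanSpace ℝ (Fin N)} (hx : ‖x‖ < ρ) :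
    fderiv ℝ (mtu N a ρ R) x = 0 := by
  have hev : mtu N a ρ R =ᶠ[nhds x] fun _ => a * (Real.log R - Real.log ρ) := by
    filter_upwards [IsOpen.mem_nhds Metric.isOpen_ball (mem_ball_zero_iff.mpr hx)] with y hy
    exact mtphi_of_le hρR (mem_ball_zero_iff.mp hy).le
  rw [hev.fderiv_eq, fderiv_fun_const]
  rfl

lemma mtu_fderiv_big {x : EuclideanSpace ℝ (Fin N)} (hρR : ρ ≤ R) (hx : R < ‖x‖) :
    fderiv ℝ (mtu N a ρ R) x = 0 := by
  have hev : mtu N a ρ R =ᶠ[nhds x] fun _ => 0 := by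
    have hop : IsOpen {y : EuclideanSpace ℝ (Fin N) | R < ‖y‖} :=
      isOpen_lt continuous_const continuous_norm
    filter_upwards [hop.mem_nhds hx] with y hy
    exact mtphi_of_ge hρR (le_of_lt hy)
  rw [hev.fderiv_eq, fderiv_fun_const]
  rfl

lemma mtu_fderiv_mid (ha : 0 ≤ a) (hρ : 0 < ρ) {x : EuclideanSpace ℝ (Fin N)}
    (h1 : ρ < ‖x‖) (h2 : ‖x‖ < R) :
    ‖fderiv ℝ (mtu N a ρ R) x‖ = a / ‖x‖ := by
  have hx0 : (0:ℝ) < ‖x‖ := lt_trans hρ h1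
  have hxne : x ≠ 0 := by
    intro h; rw [h, norm_zero] at hx0; exact lt_irrefl _ hx0
  have hn2 : ‖x‖ ^ 2 ≠ 0 := by positivity
  -- the smooth local model
  set v : EuclideanSpace ℝ (Fin N) → ℝ :=
    fun y => a * Real.log R - (a/2) * Real.log (‖y‖^2) with hv
  have hd1 : HasFDerivAt (fun y : EuclideanSpace ℝ (Fin N) => ‖y‖^2)
      (2 • (innerSL ℝ x)) x := (hasStrictFDerivAt_norm_sq x).hasFDerivAt
  have hd2 : HasDerivAt Real.log (‖x‖^2)⁻¹ (‖x‖^2) := Real.hasDerivAt_log hn2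
  have hd3 : HasFDerivAt (fun y : EuclideanSpace ℝ (Fin N) => Real.log (‖y‖^2))
      ((‖x‖^2)⁻¹ • (2 • (innerSL ℝ x))) x := by
    have := hd2.comp_hasFDerivAt x hd1; exact this
  have hd4 : HasFDerivAt v
      (-((a/2) • ((‖x‖^2)⁻¹ • (2 • (innerSL ℝ x))))) x :=
    (hd3.const_mul (a/2)).const_sub (a * Real.log R)
  have hev : mtu N a ρ R =ᶠ[nhds x] v := by
    have hop : IsOpen {y : EuclideanSpace ℝ (Fin N) | ρ < ‖y‖ ∧ ‖y‖ < R} :=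
      (isOpen_lt continuous_const continuous_norm).inter
        (isOpen_lt continuous_norm continuous_const)
    filter_upwards [hop.mem_nhds ⟨h1, h2⟩] with y hy
    have hy0 : (0:ℝ) < ‖y‖ := lt_trans hρ hy.1
    rw [mtu, mtphi_of_mem hy.1.le hy.2.le, hv]
    simp only
    rw [sq, Real.log_mul hy0.ne' hy0.ne']
    ring
  rw [hev.fderiv_eq, hd4.fderiv, norm_neg]
  rw [← Nat.cast_smul_eq_nsmul ℝ 2 (innerSL ℝ x), norm_smul, norm_smul, norm_smul,
    innerSL_apply_norm]
  simp only [Real.norm_eq_abs, Nat.cast_ofNat]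
  rw [abs_of_nonneg (by positivity : (0:ℝ) ≤ a/2),
    abs_of_nonneg (by positivity : (0:ℝ) ≤ (‖x‖^2)⁻¹),
    abs_of_nonneg (by norm_num : (0:ℝ) ≤ (2:ℝ))]
  field_simp


lemma volB_pos (hN : 1 ≤ N) :
    0 < (volume (Metric.ball (0 : EuclideanSpace ℝ (Fin N)) 1)).toReal := by
  haveI : Nonempty (Fin N) := Fin.pos_iff_nonempty.mp (by omega)
  rw [ENNReal.toReal_pos_iff]
  exact ⟨measure_ball_pos volume _ one_pos, measure_ball_lt_top⟩

lemma sphereVol_eq (hN : 1 ≤ N) :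
    sphereVol N = N * (volume (Metric.ball (0 : EuclideanSpace ℝ (Fin N)) 1)).toReal := by
  haveI : Nonempty (Fin N) := Fin.pos_iff_nonempty.mp (by omega)
  rw [EuclideanSpace.volume_ball]
  simp only [Fintype.card_fin, ENNReal.ofReal_one, one_pow, one_mul]
  have hΓ : 0 < Real.Gamma ((N:ℝ)/2 + 1) := Real.Gamma_pos_of_pos (by positivity)
  rw [ENNReal.toReal_ofReal (by positivity)]
  have hsq : Real.sqrt Real.pi ^ N = Real.pi ^ ((N:ℝ)/2) := by
    rw [Real.sqrt_eq_rpow, ← Real.rpow_natCast (Real.pi ^ ((1:ℝ)/2)) N,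
      ← Real.rpow_mul Real.pi_pos.le]
    congr 1
    ring
  rw [sphereVol, hsq, mul_div_assoc]

lemma mtu_grad_integral (hN : 2 ≤ N) (ha : 0 < a) (hρ : 0 < ρ) (hρR : ρ < R) :
    (∫ x : EuclideanSpace ℝ (Fin N), ‖fderiv ℝ (mtu N a ρ R) x‖ ^ N)
      = sphereVol N * a ^ N * Real.log (R / ρ) := by
  haveI : Nonempty (Fin N) := Fin.pos_iff_nonempty.mp (by omega)
  haveI : Nontrivial (EuclideanSpace ℝ (Fin N)) := inferInstance
  set gg : ℝ → ℝ := Set.indicator (Set.Ioo ρ R) (fun r => (a/r)^N) with hgg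
  have hae : (fun x : EuclideanSpace ℝ (Fin N) => ‖fderiv ℝ (mtu N a ρ R) x‖ ^ N)
      =ᵐ[volume] (fun x => gg ‖x‖) := by
    have hsum : volume (Metric.sphere (0:EuclideanSpace ℝ (Fin N)) ρ ∪ Metric.sphere 0 R) = 0 :=
      measure_union_null (Measure.addHaar_sphere volume 0 ρ) (Measure.addHaar_sphere volume 0 R)
    rw [Filter.EventuallyEq, ae_iff]
    apply measure_mono_null ?_ hsum
    intro x hx
    simp only [Set.mem_setOf_eq] at hx
    by_contra hmem
    apply hx
    simp only [Set.mem_union, mem_sphere_zero_iff_norm] at hmem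
    push_neg at hmem
    obtain ⟨hne1, hne2⟩ := hmem
    rcases lt_trichotomy ‖x‖ ρ with h|h|h
    · rw [mtu_fderiv_small hρR.le h, norm_zero, hgg]
      rw [Set.indicator_of_notMem (by simp only [Set.mem_Ioo, not_and]; intro h'; linarith)]
      rw [zero_pow (by omega)]
    · exact absurd h hne1
    · rcases lt_trichotomy ‖x‖ R with h'|h'|h'
      · rw [mtu_fderiv_mid ha.le hρ h h', hgg,
          Set.indicator_of_mem (Set.mem_Ioo.mpr ⟨h, h'⟩)]
      · exact absurd h' hne2
      · rw [mtu_fderiv_big hρR.le h', norm_zero, hgg]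
        rw [Set.indicator_of_notMem (by simp only [Set.mem_Ioo, not_and]; intro h''; linarith)]
        rw [zero_pow (by omega)]
  rw [integral_congr_ae hae,
    integral_fun_norm_addHaar (volume : Measure (EuclideanSpace ℝ (Fin N))) gg]
  simp only [finrank_euclideanSpace_fin]
  have hIoo : Set.Ioo ρ R ⊆ Set.Ioi (0:ℝ) := fun y hy => lt_trans hρ hy.1
  have h1 : ∀ y ∈ Set.Ioi (0:ℝ), y ^ (N-1) • gg y
      = Set.indicator (Set.Ioo ρ R) (fun y => a^N * y⁻¹) y := by
    intro y hy
    have hy0 : (0:ℝ) < y := hy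
    by_cases hmem : y ∈ Set.Ioo ρ R
    · rw [hgg, Set.indicator_of_mem hmem, Set.indicator_of_mem hmem, smul_eq_mul, div_pow]
      have hpow : y ^ N = y ^ (N-1) * y := by
        conv_lhs => rw [show N = (N-1)+1 by omega]
        rw [pow_succ]
      rw [hpow]
      field_simp
    · rw [hgg, Set.indicator_of_notMem hmem, Set.indicator_of_notMem hmem, smul_zero]
  rw [setIntegral_congr_fun measurableSet_Ioi h1, setIntegral_indicator measurableSet_Ioo,
    Set.inter_eq_self_of_subset_right hIoo, integral_const_mul]
  have h2 : ∫ y in Set.Ioo ρ R, y⁻¹ = Real.log (R/ρ) := by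
    rw [← integral_Ioc_eq_integral_Ioo, ← intervalIntegral.integral_of_le hρR.le]
    exact integral_inv_of_pos hρ (lt_trans hρ hρR)
  rw [h2, nsmul_eq_mul, smul_eq_mul, sphereVol_eq (show 1 ≤ N by omega), measureReal_def]
  ring

lemma mtu_ln_integral_le (hN : 2 ≤ N) (ha : 0 < a) (hρ : 0 < ρ) (hρR : ρ < R) :
    (∫ x : EuclideanSpace ℝ (Fin N), |mtu N a ρ R x| ^ N)
      ≤ sphereVol N * a ^ N * (N:ℝ) ^ N * R ^ N / ((N:ℝ) - 1) := by
  obtain ⟨m, rfl⟩ : ∃ m, N = m + 2 := ⟨N - 2, by omega⟩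
  haveI : Nonempty (Fin (m+2)) := Fin.pos_iff_nonempty.mp (by omega)
  haveI : Nontrivial (EuclideanSpace ℝ (Fin (m+2))) := inferInstance
  have hR : 0 < R := lt_trans hρ hρR
  have hN1 : (1:ℝ) ≤ ((m+2:ℕ):ℝ) := by exact_mod_cast (show 1 ≤ m+2 by omega)
  set f : ℝ → ℝ := fun r => |mtphi a ρ R r| ^ (m+2) with hf
  have heq : (fun x : EuclideanSpace ℝ (Fin (m+2)) => |mtu (m+2) a ρ R x| ^ (m+2)) = fun x => f ‖x‖ := rfl
  rw [heq, integral_fun_norm_addHaar (volume : Measure (EuclideanSpace ℝ (Fin (m+2)))) f]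
  simp only [finrank_euclideanSpace_fin]
  have hFcont : Continuous fun y : ℝ => y ^ ((m+2)-1) • f y := by
    apply Continuous.smul (continuous_pow _)
    exact ((mtphi_continuous hρ).abs).pow (m+2)
  have hstep : ∫ y in Set.Ioi (0:ℝ), y ^ ((m+2)-1) • f y
      = ∫ y in Set.Ioc (0:ℝ) R, y ^ ((m+2)-1) • f y := by
    apply setIntegral_eq_of_subset_of_forall_diff_eq_zero measurableSet_Ioi
      Set.Ioc_subset_Ioi_self
    intro y hy
    obtain ⟨hy1, hy2⟩ := hy
    have hyR : R < y := by
      by_contra hcon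
      exact hy2 ⟨hy1, not_lt.mp hcon⟩
    rw [hf]
    simp only [smul_eq_mul]
    rw [mtphi_of_ge hρR.le hyR.le, abs_zero, zero_pow (by omega), mul_zero]
  rw [hstep]
  have hkey : ∫ y in Set.Ioc (0:ℝ) R, y ^ ((m+2)-1) • f y
      ≤ ∫ y in Set.Ioc (0:ℝ) R, a^(m+2) * ((m+2:ℕ):ℝ)^(m+2) * R * y ^ ((m+2)-2) := by
    apply setIntegral_mono_on
    · exact hFcont.integrableOn_Ioc
    · exact (Continuous.mul continuous_const (continuous_pow _)).integrableOn_Ioc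
    · exact measurableSet_Ioc
    · intro y hy
      obtain ⟨hy0, hyR⟩ := hy
      -- the clamped value
      set c : ℝ := max ρ (min R y) with hc
      have hc0 : 0 < c := lt_of_lt_of_le hρ (le_max_left _ _)
      have hcR : c ≤ R := max_le hρR.le (min_le_left _ _)
      have hyc : y ≤ c := by
        rw [hc, min_eq_right hyR]
        exact le_max_right _ _
      have hkey2 : |mtphi a ρ R y| ≤ a * (((m+2:ℕ):ℝ) * (R/y) ^ ((1:ℝ)/(m+2))) := by
        have hval : mtphi a ρ R y = a * Real.log (R / c) := by
          rw [Real.log_div hR.ne' hc0.ne']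
          rfl
        have hnn : 0 ≤ mtphi a ρ R y := mtphi_nonneg ha.le hρ hρR.le y
        rw [abs_of_nonneg hnn, hval]
        have hz : (0:ℝ) < R / c := div_pos hR hc0
        have hlog : Real.log (R/c) ≤ ((m+2:ℕ):ℝ) * ((R/c) ^ ((1:ℝ)/(m+2))) := by
          have h6 : Real.log (R/c) = ((m+2:ℕ):ℝ) * Real.log ((R/c) ^ ((1:ℝ)/(m+2))) := by
            rw [Real.log_rpow hz]
            field_simp
            norm_num
          rw [h6]
          have h7 : Real.log ((R/c) ^ ((1:ℝ)/(m+2))) ≤ (R/c) ^ ((1:ℝ)/(m+2)) := by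
            have h8 := Real.log_le_sub_one_of_pos (Real.rpow_pos_of_pos hz ((1:ℝ)/(m+2)))
            linarith
          have : (0:ℝ) < ((m+2:ℕ):ℝ) := by linarith
          nlinarith [Real.rpow_pos_of_pos hz ((1:ℝ)/(m+2))]
        have hmono : (R/c) ^ ((1:ℝ)/(m+2)) ≤ (R/y) ^ ((1:ℝ)/(m+2)) := by
          apply Real.rpow_le_rpow hz.le ?_ (by positivity)
          gcongr
        calc a * Real.log (R/c) ≤ a * (((m+2:ℕ):ℝ) * ((R/c) ^ ((1:ℝ)/(m+2)))) := by
              apply mul_le_mul_of_nonneg_left hlog ha.le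
          _ ≤ a * (((m+2:ℕ):ℝ) * ((R/y) ^ ((1:ℝ)/(m+2)))) := by
              apply mul_le_mul_of_nonneg_left ?_ ha.le
              apply mul_le_mul_of_nonneg_left hmono (by linarith)
      have h5 : ((R/y) ^ ((1:ℝ)/(m+2)))^(m+2) = R/y := by
        rw [← Real.rpow_natCast ((R/y) ^ ((1:ℝ)/(m+2))) (m+2), ← Real.rpow_mul (by positivity)]
        have hcast : ((1:ℝ)/(m+2)) * ((m+2:ℕ):ℝ) = 1 := by
          push_cast
          field_simp
        rw [hcast, Real.rpow_one]
      have h9 : |mtphi a ρ R y| ^ (m+2) ≤ (a * (((m+2:ℕ):ℝ) * (R/y) ^ ((1:ℝ)/(m+2))))^(m+2) :=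
        pow_le_pow_left₀ (abs_nonneg _) hkey2 (m+2)
      have h10 : (a * (((m+2:ℕ):ℝ) * (R/y) ^ ((1:ℝ)/(m+2))))^(m+2) = a^(m+2) * ((m+2:ℕ):ℝ)^(m+2) * (R/y) := by
        rw [mul_pow, mul_pow, h5]
        ring
      rw [smul_eq_mul, hf]
      calc y ^ ((m+2)-1) * |mtphi a ρ R y| ^ (m+2) ≤ y ^ ((m+2)-1) * (a^(m+2) * ((m+2:ℕ):ℝ)^(m+2) * (R/y)) := by
            rw [← h10]
            exact mul_le_mul_of_nonneg_left h9 (by positivity)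
        _ = a^(m+2) * ((m+2:ℕ):ℝ)^(m+2) * R * y ^ ((m+2)-2) := by
            have hpow : y ^ ((m+2)-1) = y ^ ((m+2)-2) * y := by
              conv_lhs => rw [show (m+2)-1 = ((m+2)-2)+1 by omega]
              rw [pow_succ]
            rw [hpow]
            field_simp [hy0.ne']
            try ring
            try tauto
  have hG : ∫ y in Set.Ioc (0:ℝ) R, a^(m+2) * ((m+2:ℕ):ℝ)^(m+2) * R * y ^ ((m+2)-2)
      = a^(m+2) * ((m+2:ℕ):ℝ)^(m+2) * R * (R^((m+2)-1) / (((m+2:ℕ):ℝ)-1)) := by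
    rw [integral_const_mul, ← intervalIntegral.integral_of_le hR.le, integral_pow]
    rw [show ((m+2)-2) = m by omega, show ((m+2)-1) = m+1 by omega,
      zero_pow (by omega : m+1 ≠ 0)]
    push_cast
    ring
  rw [nsmul_eq_mul, smul_eq_mul, sphereVol_eq (show 1 ≤ m+2 by omega)]
  have hvolB := volB_pos (N := m+2) (by omega)
  calc ((m+2:ℕ):ℝ) * ((volume (Metric.ball (0 : EuclideanSpace ℝ (Fin (m+2))) 1)).toReal
        * ∫ y in Set.Ioc (0:ℝ) R, y ^ (m+2-1) • f y)
      ≤ ((m+2:ℕ):ℝ) * ((volume (Metric.ball (0 : EuclideanSpace ℝ (Fin (m+2))) 1)).toReal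
        * (a^(m+2) * ((m+2:ℕ):ℝ)^(m+2) * R * (R^(m+2-1) / (((m+2:ℕ):ℝ)-1)))) := by
        rw [hG] at hkey
        exact mul_le_mul_of_nonneg_left
          (mul_le_mul_of_nonneg_left hkey hvolB.le) (by positivity)
    _ = ((m+2:ℕ):ℝ) * (volume (Metric.ball (0 : EuclideanSpace ℝ (Fin (m+2))) 1)).toReal
        * a ^ (m+2) * ((m+2:ℕ):ℝ) ^ (m+2) * R ^ (m+2) / (((m+2:ℕ):ℝ) - 1) := by
        push_cast
        have hd : ((m:ℝ) + 2) - 1 ≠ 0 := by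
          have hm : (0:ℝ) ≤ (m:ℝ) := Nat.cast_nonneg m
          intro hcon
          linarith
        field_simp
        ring

set_option maxHeartbeats 1000000 in
lemma mtu_phi_integral_ge (hN : 2 ≤ N) (ha : 0 < a) (hρ : 0 < ρ) (hρR : ρ < R) :
    (volume (Metric.ball (0 : EuclideanSpace ℝ (Fin N)) 1)).toReal * ρ ^ N
        * PhiMT N (a * (Real.log R - Real.log ρ))
      ≤ ∫ x : EuclideanSpace ℝ (Fin N), PhiMT N (mtu N a ρ R x) := by
  haveI : Nonempty (Fin N) := Fin.pos_iff_nonempty.mp (by omega)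
  have hint : Integrable (fun x : EuclideanSpace ℝ (Fin N) => PhiMT N (mtu N a ρ R x)) volume := by
    have hc : Continuous (fun x : EuclideanSpace ℝ (Fin N) => PhiMT N (mtu N a ρ R x)) :=
      (PhiMT_continuous hN).comp (mtu_continuous hρ)
    have hcs2 : HasCompactSupport (fun x : EuclideanSpace ℝ (Fin N) => PhiMT N (mtu N a ρ R x)) :=
      HasCompactSupport.comp_left (g := PhiMT N) (f := mtu N a ρ R)
        (mtu_hasCompactSupport (N := N) (a := a) hρR.le) (PhiMT_zero hN)
    exact hc.integrable_of_hasCompactSupport hcs2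
  have h2 : ∫ x in Metric.closedBall (0:EuclideanSpace ℝ (Fin N)) ρ, PhiMT N (mtu N a ρ R x)
      ≤ ∫ x, PhiMT N (mtu N a ρ R x) :=
    setIntegral_le_integral hint (Filter.Eventually.of_forall fun x => PhiMT_nonneg hN _)
  have h1 : ∫ x in Metric.closedBall (0:EuclideanSpace ℝ (Fin N)) ρ, PhiMT N (mtu N a ρ R x)
      = (volume (Metric.closedBall (0:EuclideanSpace ℝ (Fin N)) ρ)).toReal
        * PhiMT N (a * (Real.log R - Real.log ρ)) := by
    have hEq : Set.EqOn (fun x : EuclideanSpace ℝ (Fin N) => PhiMT N (mtu N a ρ R x))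
        (fun _ => PhiMT N (a * (Real.log R - Real.log ρ))) (Metric.closedBall 0 ρ) := by
      intro x hx
      simp only [Metric.mem_closedBall, dist_zero_right] at hx
      simp only [mtu]
      rw [mtphi_of_le hρR.le hx]
    rw [setIntegral_congr_fun measurableSet_closedBall hEq, setIntegral_const, smul_eq_mul, measureReal_def]
  have h3 : (volume (Metric.closedBall (0:EuclideanSpace ℝ (Fin N)) ρ)).toReal
      = ρ ^ N * (volume (Metric.ball (0:EuclideanSpace ℝ (Fin N)) 1)).toReal := by
    rw [Measure.addHaar_closedBall volume 0 hρ.le, ENNReal.toReal_mul,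
      ENNReal.toReal_ofReal (by positivity)]
    congr 2
    exact finrank_euclideanSpace_fin
  rw [h3] at h1
  calc (volume (Metric.ball (0:EuclideanSpace ℝ (Fin N)) 1)).toReal * ρ ^ N
        * PhiMT N (a * (Real.log R - Real.log ρ))
      = ρ ^ N * (volume (Metric.ball (0:EuclideanSpace ℝ (Fin N)) 1)).toReal
        * PhiMT N (a * (Real.log R - Real.log ρ)) := by ring
    _ ≤ ∫ x, PhiMT N (mtu N a ρ R x) := by rw [← h1]; exact h2

end MTAux

set_option maxHeartbeats 1000000 in
/-- For any `C > 0`, the supremum of `∫_{ℝ^N} Φ(u)` over compactly supported Lipschitz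
functions `u : ℝ^N → ℝ` with `∫ |∇u|^N ≤ 1` and `∫ |u|^N ≤ C` is `+∞` (i.e. the set of
attained values is not bounded above). Here `∇u` is the a.e. defined gradient (`fderiv`). -/
theorem moser_trudinger_unbounded_with_LN_constraint (N : ℕ) (hN : 2 ≤ N)
    (C : ℝ) (hC : 0 < C) :
    ¬ BddAbove {r : ℝ | ∃ u : EuclideanSpace ℝ (Fin N) → ℝ,
        (∃ K : NNReal, LipschitzWith K u) ∧ HasCompactSupport u ∧
        (∫ x, ‖fderiv ℝ u x‖ ^ N) ≤ 1 ∧ (∫ x, |u x| ^ N) ≤ C ∧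
        r = ∫ x, PhiMT N (u x)} := by
  rw [not_bddAbove_iff]
  intro b
  haveI : Nonempty (Fin N) := Fin.pos_iff_nonempty.mp (by omega)
  have hN1 : (1:ℝ) < (N:ℝ) := by exact_mod_cast (show 1 < N by omega)
  have hNr : (0:ℝ) < (N:ℝ) - 1 := by linarith
  set volB := (volume (Metric.ball (0 : EuclideanSpace ℝ (Fin N)) 1)).toReal with hvolB
  have hvB : 0 < volB := volB_pos (by omega)
  have hω : 0 < sphereVol N := sphereVol_pos (by omega)
  have hωeq : sphereVol N = N * volB := sphereVol_eq (by omega)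
  -- choice of the parameter k
  set k : ℝ := max (max 1 (2*((N:ℝ)-1)*(Nat.factorial (N-1) : ℝ)))
      ((2*(N:ℝ)^N*(|b|+1))/(((N:ℝ)-1)*C*volB)) with hkdef
  have hk1 : (1:ℝ) ≤ k := le_trans (le_max_left _ _) (le_max_left _ _)
  have hk0 : (0:ℝ) < k := lt_of_lt_of_le one_pos hk1
  have hkfac : 2*((N:ℝ)-1)*(Nat.factorial (N-1) : ℝ) ≤ k :=
    le_trans (le_max_right _ _) (le_max_left _ _)
  have hkb : (2*(N:ℝ)^N*(|b|+1))/(((N:ℝ)-1)*C*volB) ≤ k := le_max_right _ _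
  -- the parameters of the Moser function
  set a : ℝ := (sphereVol N * k) ^ (-(1:ℝ)/N) with hadef
  set R : ℝ := (((N:ℝ)-1)*C*k/(N:ℝ)^N) ^ ((1:ℝ)/N) with hRdef
  set ρ : ℝ := R * Real.exp (-k) with hρdef
  have hωk : 0 < sphereVol N * k := mul_pos hω hk0
  have ha : 0 < a := Real.rpow_pos_of_pos hωk _
  have hRbase : 0 < ((N:ℝ)-1)*C*k/(N:ℝ)^N := by positivity
  have hR : 0 < R := Real.rpow_pos_of_pos hRbase _
  have hρ : 0 < ρ := mul_pos hR (Real.exp_pos _)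
  have hρR : ρ < R := by
    rw [hρdef]
    nth_rewrite 2 [← mul_one R]
    exact mul_lt_mul_of_pos_left (Real.exp_lt_one_iff.mpr (by linarith)) hR
  have hNne : (N:ℝ) ≠ 0 := by linarith
  have haN : a ^ N = (sphereVol N * k)⁻¹ := by
    rw [hadef, ← Real.rpow_natCast ((sphereVol N * k) ^ (-(1:ℝ)/N)) N,
      ← Real.rpow_mul hωk.le, show (-(1:ℝ)/N) * (N:ℝ) = -1 by field_simp,
      Real.rpow_neg_one]
  have hRN : R ^ N = ((N:ℝ)-1)*C*k/(N:ℝ)^N := by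
    rw [hRdef, ← Real.rpow_natCast _ N, ← Real.rpow_mul hRbase.le,
      show ((1:ℝ)/N) * (N:ℝ) = 1 by field_simp, Real.rpow_one]
  have hlog : Real.log R - Real.log ρ = k := by
    rw [hρdef, Real.log_mul hR.ne' (Real.exp_ne_zero _), Real.log_exp]; ring
  have hlogQ : Real.log (R / ρ) = k := by
    rw [Real.log_div hR.ne' hρ.ne', hlog]
  have hρN : ρ ^ N = R^N * Real.exp (-((N:ℝ)*k)) := by
    rw [hρdef, mul_pow, ← Real.exp_nat_mul]
    congr 2
    ring
  clear_value volB k a R ρ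
  -- the constraints
  have hgrad : (∫ x, ‖fderiv ℝ (mtu N a ρ R) x‖ ^ N) ≤ 1 := by
    rw [mtu_grad_integral hN ha hρ hρR, hlogQ, haN]
    apply le_of_eq
    field_simp
  have hLN : (∫ x, |mtu N a ρ R x| ^ N) ≤ C := by
    refine le_trans (mtu_ln_integral_le hN ha hρ hρR) ?_
    rw [haN, hRN]
    apply le_of_eq
    have hNN : ((N:ℝ))^N ≠ 0 := by positivity
    field_simp
  -- the value of the functional
  have hval := mtu_phi_integral_ge hN ha hρ hρR
  rw [hlog] at hval
  rw [← hvolB] at hval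
  -- computing the exponent
  have hak : (0:ℝ) ≤ a * k := by positivity
  have hexp : alphaMT N * (a*k) ^ ((N:ℝ)/((N:ℝ)-1)) = (N:ℝ) * k := by
    have h1 : (a*k) ^ ((N:ℝ)/((N:ℝ)-1))
        = a ^ ((N:ℝ)/((N:ℝ)-1)) * k ^ ((N:ℝ)/((N:ℝ)-1)) := Real.mul_rpow ha.le hk0.le
    have h2 : a ^ ((N:ℝ)/((N:ℝ)-1)) = (sphereVol N * k) ^ (-(1:ℝ)/((N:ℝ)-1)) := by
      rw [hadef, ← Real.rpow_mul hωk.le]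
      congr 1
      field_simp
    have h3 : (sphereVol N * k) ^ (-(1:ℝ)/((N:ℝ)-1))
        = sphereVol N ^ (-(1:ℝ)/((N:ℝ)-1)) * k ^ (-(1:ℝ)/((N:ℝ)-1)) :=
      Real.mul_rpow hω.le hk0.le
    have h4 : k ^ ((N:ℝ)/((N:ℝ)-1)) * k ^ (-(1:ℝ)/((N:ℝ)-1)) = k := by
      rw [← Real.rpow_add hk0, show ((N:ℝ)/((N:ℝ)-1)) + (-(1:ℝ)/((N:ℝ)-1)) = 1 by
        field_simp; ring, Real.rpow_one]
    have h5 : sphereVol N ^ ((1:ℝ)/((N:ℝ)-1)) * sphereVol N ^ (-(1:ℝ)/((N:ℝ)-1)) = 1 := by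
      rw [← Real.rpow_add hω, show (1:ℝ)/((N:ℝ)-1) + (-(1:ℝ)/((N:ℝ)-1)) = 0 by ring,
        Real.rpow_zero]
    rw [h1, h2, h3, alphaMT]
    calc (N:ℝ) * sphereVol N ^ ((1:ℝ)/((N:ℝ)-1))
          * (sphereVol N ^ (-(1:ℝ)/((N:ℝ)-1)) * k ^ (-(1:ℝ)/((N:ℝ)-1))
            * k ^ ((N:ℝ)/((N:ℝ)-1)))
        = (N:ℝ) * (sphereVol N ^ ((1:ℝ)/((N:ℝ)-1)) * sphereVol N ^ (-(1:ℝ)/((N:ℝ)-1)))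
          * (k ^ ((N:ℝ)/((N:ℝ)-1)) * k ^ (-(1:ℝ)/((N:ℝ)-1))) := by ring
      _ = (N:ℝ) * k := by rw [h4, h5]; ring
  have hPhi : PhiMT N (a*k) = Real.exp ((N:ℝ)*k)
      - ∑ j ∈ Finset.range (N-1), ((N:ℝ)*k)^j / (Nat.factorial j : ℝ) := by
    rw [PhiMT_eq hN hak, hexp]
  -- bounding the subtracted sum
  have hs1 : (1:ℝ) ≤ (N:ℝ)*k := by nlinarith
  have hsum : ∑ j ∈ Finset.range (N-1), ((N:ℝ)*k)^j / (Nat.factorial j : ℝ)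
      ≤ ((N:ℝ)-1) * ((N:ℝ)*k)^(N-2) := by
    have hbound : ∀ j ∈ Finset.range (N-1),
        ((N:ℝ)*k)^j / (Nat.factorial j : ℝ) ≤ ((N:ℝ)*k)^(N-2) := by
      intro j hj
      have hj' : j ≤ N-2 := by have := Finset.mem_range.mp hj; omega
      have hfac : (1:ℝ) ≤ (Nat.factorial j : ℝ) := by
        exact_mod_cast Nat.one_le_iff_ne_zero.mpr (Nat.factorial_pos j).ne'
      exact le_trans (div_le_self (by positivity) hfac) (pow_le_pow_right₀ hs1 hj')
    calc ∑ j ∈ Finset.range (N-1), ((N:ℝ)*k)^j / (Nat.factorial j : ℝ)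
        ≤ ∑ _j ∈ Finset.range (N-1), ((N:ℝ)*k)^(N-2) := Finset.sum_le_sum hbound
      _ = ((N-1 : ℕ):ℝ) * ((N:ℝ)*k)^(N-2) := by
          rw [Finset.sum_const, Finset.card_range, nsmul_eq_mul]
      _ = ((N:ℝ)-1) * ((N:ℝ)*k)^(N-2) := by
          congr 1
          push_cast [Nat.cast_sub (show 1 ≤ N by omega)]
          ring
  have hfacpos : (0:ℝ) < (Nat.factorial (N-1) : ℝ) := by exact_mod_cast Nat.factorial_pos _
  have hterm : ((N:ℝ)*k)^(N-1) / (Nat.factorial (N-1) : ℝ) ≤ Real.exp ((N:ℝ)*k) := by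
    have h0 : ∀ j ∈ Finset.range N, (0:ℝ) ≤ ((N:ℝ)*k)^j / (Nat.factorial j : ℝ) :=
      fun j _ => by positivity
    have hmem : (N-1) ∈ Finset.range N := Finset.mem_range.mpr (by omega)
    calc ((N:ℝ)*k)^(N-1) / (Nat.factorial (N-1) : ℝ)
        ≤ ∑ j ∈ Finset.range N, ((N:ℝ)*k)^j / (Nat.factorial j : ℝ) :=
          Finset.single_le_sum h0 hmem
      _ ≤ Real.exp ((N:ℝ)*k) := Real.sum_le_exp_of_nonneg (by positivity) N
  have hkey : 2*((N:ℝ)-1)*(Nat.factorial (N-1) : ℝ) * ((N:ℝ)*k)^(N-2) ≤ ((N:ℝ)*k)^(N-1) := by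
    have hstep : ((N:ℝ)*k)^(N-1) = ((N:ℝ)*k)^(N-2) * ((N:ℝ)*k) := by
      conv_lhs => rw [show N-1 = (N-2)+1 by omega]
      rw [pow_succ]
    have h2k : 2*((N:ℝ)-1)*(Nat.factorial (N-1):ℝ) ≤ (N:ℝ)*k := by nlinarith
    rw [hstep]
    have hXnn : (0:ℝ) ≤ ((N:ℝ)*k)^(N-2) := by positivity
    nlinarith
  have hexp_ge : 2*((N:ℝ)-1) * ((N:ℝ)*k)^(N-2) ≤ Real.exp ((N:ℝ)*k) := by
    have h6 : 2*((N:ℝ)-1) * ((N:ℝ)*k)^(N-2)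
        = (2*((N:ℝ)-1)*(Nat.factorial (N-1) : ℝ) * ((N:ℝ)*k)^(N-2)) / (Nat.factorial (N-1) : ℝ) := by
      field_simp
    rw [h6]
    exact le_trans ((div_le_div_iff_of_pos_right hfacpos).mpr hkey) hterm
  have hPhi_ge : Real.exp ((N:ℝ)*k) / 2 ≤ PhiMT N (a*k) := by
    rw [hPhi]
    linarith
  -- assembling the lower bound
  have hfinal1 : volB * ρ^N * (Real.exp ((N:ℝ)*k)/2) ≤ volB * ρ^N * PhiMT N (a*k) :=
    mul_le_mul_of_nonneg_left hPhi_ge (by positivity)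
  have hcan : Real.exp (-((N:ℝ)*k)) * Real.exp ((N:ℝ)*k) = 1 := by
    rw [← Real.exp_add, neg_add_cancel, Real.exp_zero]
  have hfinal2 : volB * ρ^N * (Real.exp ((N:ℝ)*k)/2) = volB * R^N / 2 := by
    rw [hρN]
    linear_combination (volB * R^N / 2) * hcan
  have hfinal3 : |b| + 1 ≤ volB * R^N / 2 := by
    rw [hRN]
    have hDpos : 0 < ((N:ℝ)-1)*C*volB := by positivity
    rw [div_le_iff₀ hDpos] at hkb
    have hgoal' : volB * (((N:ℝ)-1)*C*k/(N:ℝ)^N) / 2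
        = (k * (((N:ℝ)-1)*C*volB))/(2*(N:ℝ)^N) := by ring
    rw [hgoal', le_div_iff₀ (by positivity)]
    calc (|b|+1) * (2*(N:ℝ)^N) = 2*(N:ℝ)^N*(|b|+1) := by ring
      _ ≤ k * (((N:ℝ)-1)*C*volB) := hkb
  refine ⟨∫ x, PhiMT N (mtu N a ρ R x),
    ⟨mtu N a ρ R, mtu_lipschitz ha hρ hρR.le, mtu_hasCompactSupport hρR.le,
      hgrad, hLN, rfl⟩, ?_⟩
  have hb : b ≤ |b| := le_abs_self b
  linarith
end

section
/- Let N ≥ 2, let B ⊂ ℝ^N be the open unit ball, and let ρ : B → (0,∞) be continuous. Set ζ(x) := (1 − |x|²)² ρ(x) / 4, and suppose there exists a boundary point x̃ with |x̃| = 1 such that ζ(x) → +∞ as x → x̃ (x ∈ B), i.e. for every M > 0 there is δ > 0 such that ζ(x) ≥ M whenever x ∈ B and |x − x̃| < δ. Then inf { ∫_B |∇u(x)|^N dx / ∫_B |u(x)|^N ρ(x)^{N/2} dx : u ∈ C_c^∞(B), u ≢ 0 } = 0, i.e. the first Poincaré constant λ₁(B, g_ρ) of the conformal metric g_ρ = ρ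 g_e vanishes. -/
set_option maxHeartbeats 1000000


open MeasureTheory Real

/-- The open unit ball of `ℝ^N`. -/
noncomputable def unitBall (N : ℕ) : Set (EuclideanSpace ℝ (Fin N)) := Metric.ball 0 1

/-- `u ∈ C_c^∞(Ω)`: smooth, compactly supported, with support contained in `Ω`. -/
def IsTest {N : ℕ} (Ω : Set (EuclideanSpace ℝ (Fin N)))
    (u : EuclideanSpace ℝ (Fin N) → ℝ) : Prop :=
  ContDiff ℝ (⊤ : ℕ∞) u ∧ HasCompactSupport u ∧ tsupport u ⊆ Ω

lemma integral_comp_aff {N : ℕ} (g : EuclideanSpace ℝ (Fin N) → ℝ)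
    (c : EuclideanSpace ℝ (Fin N)) {r : ℝ} (hr : 0 < r) :
    (∫ x, g (r⁻¹ • (x - c))) = r ^ N * ∫ x, g x := by
  have h1 : (∫ x, g (r⁻¹ • (x - c))) = ∫ x, (fun y => g (r⁻¹ • y)) (x - c) := rfl
  rw [h1, integral_sub_right_eq_self (fun y => g (r⁻¹ • y)) c,
    Measure.integral_comp_inv_smul_of_nonneg volume g hr.le, finrank_euclideanSpace_fin,
    smul_eq_mul]


/-- If the conformal factor `ζ(x) = (1-|x|²)² ρ(x)/4` of a conformal metric `g_ρ = ρ g_e`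
on the unit ball tends to `+∞` at some boundary point `xb`, then the first Poincaré constant
`λ₁(B, g_ρ)` vanishes, i.e. the infimum of
`(∫_B |∇u|^N dx) / (∫_B |u|^N ρ^{N/2} dx)` over nonzero test functions is `0`. -/
theorem poincare_constant_vanishes_of_blowup (N : ℕ) (hN : 2 ≤ N)
    (ρ : EuclideanSpace ℝ (Fin N) → ℝ)
    (hρc : ContinuousOn ρ (unitBall N)) (hρpos : ∀ x ∈ unitBall N, 0 < ρ x)
    (xb : EuclideanSpace ℝ (Fin N)) (hxb : ‖xb‖ = 1)
    (hblow : ∀ M : ℝ, 0 < M → ∃ δ : ℝ, 0 < δ ∧ ∀ x ∈ unitBall N, ‖x - xb‖ < δ →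
      M ≤ (1 - ‖x‖ ^ 2) ^ 2 * ρ x / 4) :
    sInf {r : ℝ | ∃ u : EuclideanSpace ℝ (Fin N) → ℝ, IsTest (unitBall N) u ∧ u ≠ 0 ∧
      r = (∫ x in unitBall N, ‖fderiv ℝ u x‖ ^ N) /
        ∫ x in unitBall N, |u x| ^ N * ρ x ^ ((N : ℝ) / 2)} = 0 := by
  set S := {r : ℝ | ∃ u : EuclideanSpace ℝ (Fin N) → ℝ, IsTest (unitBall N) u ∧ u ≠ 0 ∧
      r = (∫ x in unitBall N, ‖fderiv ℝ u x‖ ^ N) /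
        ∫ x in unitBall N, |u x| ^ N * ρ x ^ ((N : ℝ) / 2)} with hS
  have hN0 : N ≠ 0 := by omega
  -- every element of S is nonnegative
  have hlb : ∀ s ∈ S, (0:ℝ) ≤ s := by
    rintro s ⟨u, hu, hune, rfl⟩
    apply div_nonneg
    · exact setIntegral_nonneg measurableSet_ball (fun x _ => by positivity)
    · refine setIntegral_nonneg measurableSet_ball (fun x hx => ?_)
      have h1 := hρpos x hx
      exact mul_nonneg (by positivity) (Real.rpow_nonneg h1.le _)
  -- the bump function
  set φ : ContDiffBump (0 : EuclideanSpace ℝ (Fin N)) := ⟨1/2, 1, by norm_num, by norm_num⟩ with hφ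
  set A : ℝ := ∫ x : EuclideanSpace ℝ (Fin N), ‖fderiv ℝ (⇑φ) x‖ ^ N with hA
  set B : ℝ := ∫ x : EuclideanSpace ℝ (Fin N), |φ x| ^ N with hB
  have hA0 : 0 ≤ A := integral_nonneg fun x => by positivity
  have hφrOut : φ.rOut = 1 := rfl
  have hB0 : 0 < B := by
    have hsupp : Function.support (fun x : EuclideanSpace ℝ (Fin N) => |φ x| ^ N) = Metric.ball 0 1 := by
      have h2 : Function.support (fun x : EuclideanSpace ℝ (Fin N) => |φ x| ^ N)
          = Function.support ⇑φ := by
        ext x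
        simp [Function.mem_support, pow_eq_zero_iff hN0, abs_eq_zero]
      rw [h2, φ.support_eq, hφrOut]
    have hint : Integrable (fun x : EuclideanSpace ℝ (Fin N) => |φ x| ^ N) := by
      apply Continuous.integrable_of_hasCompactSupport
      · exact (φ.continuous.abs.pow N)
      · apply HasCompactSupport.of_support_subset_isCompact (isCompact_closedBall (0:EuclideanSpace ℝ (Fin N)) 1)
        rw [hsupp]; exact Metric.ball_subset_closedBall
    rw [hB, integral_pos_iff_support_of_nonneg (fun x => by positivity) hint, hsupp]
    exact Metric.measure_ball_pos _ _ one_pos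
  -- key step: elements of S below any ε
  have key : ∀ ε : ℝ, 0 < ε → ∃ s ∈ S, s < ε := by
    intro ε hε
    set M : ℝ := max 1 ((4:ℝ)^N * A / (B * ε) + 1) with hM
    have hM1 : (1:ℝ) ≤ M := le_max_left _ _
    have hM0 : (0:ℝ) < M := lt_of_lt_of_le one_pos hM1
    have hMgt : (4:ℝ)^N * A / (B * ε) < M :=
      lt_of_lt_of_le (lt_add_one _) (le_max_right _ _)
    obtain ⟨δ, hδ0, hδM⟩ := hblow M hM0
    set r : ℝ := min (δ/8) (8⁻¹) with hrdef
    have hr0 : (0:ℝ) < r := lt_min (by linarith) (by norm_num)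
    have hr8 : r ≤ 8⁻¹ := min_le_right _ _
    have h4r : 4*r < δ := by
      have : r ≤ δ/8 := min_le_left _ _
      linarith
    set c : EuclideanSpace ℝ (Fin N) := (1 - 3*r) • xb with hc
    have hnc : ‖c‖ = 1 - 3*r := by
      rw [hc, norm_smul, hxb, mul_one, Real.norm_eq_abs, abs_of_nonneg (by linarith)]
    set cb : Set (EuclideanSpace ℝ (Fin N)) := Metric.closedBall c r with hcb
    have hcb_sub : cb ⊆ unitBall N := by
      intro x hx
      rw [Metric.mem_closedBall, dist_eq_norm] at hx
      have : ‖x‖ ≤ 1 - 2*r := by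
        calc ‖x‖ = ‖(x - c) + c‖ := by rw [sub_add_cancel]
          _ ≤ ‖x - c‖ + ‖c‖ := norm_add_le _ _
          _ ≤ r + (1 - 3*r) := by rw [hnc]; linarith
          _ = 1 - 2*r := by ring
      simp only [unitBall, Metric.mem_ball, dist_zero_right]
      linarith
    have hcb_near : ∀ x ∈ cb, ‖x - xb‖ < δ := by
      intro x hx
      rw [Metric.mem_closedBall, dist_eq_norm] at hx
      have hcxb : ‖c - xb‖ = 3*r := by
        have : c - xb = (-(3*r)) • xb := by
          rw [hc]; rw [sub_smul, one_smul, neg_smul]; abel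
        rw [this, norm_smul, hxb, mul_one, Real.norm_eq_abs, abs_neg,
          abs_of_nonneg (by linarith)]
      calc ‖x - xb‖ = ‖(x - c) + (c - xb)‖ := by rw [sub_add_sub_cancel]
        _ ≤ ‖x - c‖ + ‖c - xb‖ := norm_add_le _ _
        _ ≤ r + 3*r := by rw [hcxb]; linarith
        _ < δ := by linarith
    -- lower bound for ρ on cb
    have hρlow : ∀ x ∈ cb, M / (16 * r^2) ≤ ρ x := by
      intro x hx
      have hxball := hcb_sub hx
      have hρx : 0 < ρ x := hρpos x hxball
      have hM' := hδM x hxball (hcb_near x hx)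
      rw [Metric.mem_closedBall, dist_eq_norm] at hx
      have hxlb : 1 - 4*r ≤ ‖x‖ := by
        have : ‖c‖ - ‖x - c‖ ≤ ‖x‖ := by
          have := norm_sub_norm_le c x
          have h2 : ‖c - x‖ = ‖x - c‖ := norm_sub_rev c x
          linarith
        rw [hnc] at this; linarith
      have hxub : ‖x‖ ≤ 1 := by
        have := hxball
        simp only [unitBall, Metric.mem_ball, dist_zero_right] at this
        linarith
      have hx0 : 0 ≤ ‖x‖ := norm_nonneg x
      have hsq : (1 - ‖x‖^2) ≤ 8*r := by nlinarith
      have hsqpos : 0 ≤ 1 - ‖x‖^2 := by nlinarith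
      have h64 : (1 - ‖x‖^2)^2 ≤ 64*r^2 := by nlinarith
      -- 4 M ≤ (1-|x|²)² ρ x ≤ 64 r² ρ x
      have h4M : 4*M ≤ (1 - ‖x‖^2)^2 * ρ x := by linarith
      have : 4*M ≤ 64*r^2 * ρ x := by nlinarith
      rw [div_le_iff₀ (by positivity)]
      nlinarith
    have hρpow : ∀ x ∈ cb, M ^ ((N:ℝ)/2) / (4*r)^N ≤ ρ x ^ ((N:ℝ)/2) := by
      intro x hx
      have h1 : (M/(16*r^2)) ^ ((N:ℝ)/2) ≤ ρ x ^ ((N:ℝ)/2) :=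
        Real.rpow_le_rpow (by positivity) (hρlow x hx) (by positivity)
      have h2 : (M/(16*r^2)) ^ ((N:ℝ)/2) = M ^ ((N:ℝ)/2) / (4*r)^N := by
        rw [Real.div_rpow hM0.le (by positivity)]
        congr 1
        have h16 : (16*r^2 : ℝ) = (4*r)^2 := by ring
        rw [h16, ← Real.rpow_natCast (4*r) 2, ← Real.rpow_mul (by positivity)]
        rw [show ((2:ℕ):ℝ) * ((N:ℝ)/2) = (N:ℝ) by push_cast; ring, Real.rpow_natCast]
      rw [← h2]; exact h1
    -- the test function
    set T : EuclideanSpace ℝ (Fin N) → EuclideanSpace ℝ (Fin N) := fun x => r⁻¹ • (x - c) with hT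
    set u : EuclideanSpace ℝ (Fin N) → ℝ := fun x => φ (T x) with hu
    have hTsmooth : ContDiff ℝ (⊤ : ℕ∞) T :=
      (contDiff_id.sub contDiff_const).const_smul r⁻¹
    have husmooth : ContDiff ℝ (⊤ : ℕ∞) u := (φ.contDiff (n := ⊤)).comp hTsmooth
    have hsuppu : tsupport u ⊆ cb := by
      apply closure_minimal _ Metric.isClosed_closedBall
      intro x hx
      have : φ (T x) ≠ 0 := hx
      have hmem : T x ∈ Function.support φ := this
      rw [φ.support_eq, hφrOut, Metric.mem_ball, dist_zero_right] at hmem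
      rw [hT] at hmem
      simp only at hmem
      rw [norm_smul, Real.norm_eq_abs, abs_of_nonneg (by positivity)] at hmem
      rw [Metric.mem_closedBall, dist_eq_norm]
      have := (inv_mul_lt_iff₀ hr0).mp hmem
      linarith
    have hucompact : HasCompactSupport u :=
      IsCompact.of_isClosed_subset (isCompact_closedBall c r) (isClosed_tsupport u) hsuppu
    have hutest : IsTest (unitBall N) u :=
      ⟨husmooth, hucompact, hsuppu.trans hcb_sub⟩
    have hune : u ≠ 0 := by
      intro h
      have h1 : u c = 1 := by
        rw [hu]
        simp only
        have : T c = 0 := by rw [hT]; simp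
        rw [this]
        exact φ.one_of_mem_closedBall (by simp [φ.rIn_pos.le] : (0:EuclideanSpace ℝ (Fin N)) ∈ Metric.closedBall 0 φ.rIn)
      rw [h] at h1
      simp at h1
    -- derivative computation
    have hφdiff : Differentiable ℝ (⇑φ) := (φ.contDiff (n := 1)).differentiable one_ne_zero
    have hud : ∀ x, fderiv ℝ u x = r⁻¹ • fderiv ℝ (⇑φ) (T x) := by
      intro x
      have hTd : HasFDerivAt T (r⁻¹ • (ContinuousLinearMap.id ℝ (EuclideanSpace ℝ (Fin N)))) x := by
        have : HasFDerivAt (fun y : EuclideanSpace ℝ (Fin N) => y - c) (ContinuousLinearMap.id ℝ (EuclideanSpace ℝ (Fin N))) x :=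
          (hasFDerivAt_id x).sub_const c
        exact this.const_smul r⁻¹
      have hcomp : HasFDerivAt u ((fderiv ℝ (⇑φ) (T x)).comp
          (r⁻¹ • (ContinuousLinearMap.id ℝ (EuclideanSpace ℝ (Fin N))))) x :=
        ((hφdiff (T x)).hasFDerivAt).comp x hTd
      rw [hcomp.fderiv]
      ext v
      simp
    have hnormu : ∀ x, ‖fderiv ℝ u x‖ = r⁻¹ * ‖fderiv ℝ (⇑φ) (T x)‖ := by
      intro x
      rw [hud x, norm_smul, Real.norm_eq_abs, abs_of_nonneg (by positivity)]
    -- numerator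
    have hnum : (∫ x in unitBall N, ‖fderiv ℝ u x‖ ^ N) = A := by
      rw [setIntegral_eq_integral_of_forall_compl_eq_zero]
      · have : ∀ x, ‖fderiv ℝ u x‖ ^ N = (r⁻¹)^N * (fun y => ‖fderiv ℝ (⇑φ) y‖ ^ N) (T x) := by
          intro x; rw [hnormu x, mul_pow]
        rw [integral_congr_ae (Filter.Eventually.of_forall this), integral_const_mul]
        rw [show (∫ x, (fun y => ‖fderiv ℝ (⇑φ) y‖ ^ N) (T x)) =
          ∫ x, (fun y => ‖fderiv ℝ (⇑φ) y‖ ^ N) (r⁻¹ • (x - c)) from rfl]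
        rw [integral_comp_aff (fun y => ‖fderiv ℝ (⇑φ) y‖ ^ N) c hr0]
        rw [hA]
        field_simp
        rw [← mul_pow, one_div_mul_cancel hr0.ne', one_pow, one_mul]
      · intro x hx
        have hxnot : x ∉ tsupport u := fun h => hx (hutest.2.2 h)
        have : fderiv ℝ u x = 0 := by
          by_contra h
          exact hxnot (support_fderiv_subset (𝕜 := ℝ) (Function.mem_support.mpr h))
        rw [this]
        simp [hN0]
    -- denominator
    set f : EuclideanSpace ℝ (Fin N) → ℝ := fun x => |u x| ^ N * ρ x ^ ((N:ℝ)/2) with hf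
    have hf0 : ∀ x ∉ cb, f x = 0 := by
      intro x hx
      have : u x = 0 := image_eq_zero_of_notMem_tsupport (fun h => hx (hsuppu h))
      rw [hf]; simp only [this, abs_zero, zero_pow hN0, zero_mul]
    have hu0 : ∀ x ∉ cb, |u x| ^ N = 0 := by
      intro x hx
      have : u x = 0 := image_eq_zero_of_notMem_tsupport (fun h => hx (hsuppu h))
      rw [this]; simp [hN0]
    have hden1 : (∫ x in unitBall N, f x) = ∫ x in cb, f x := by
      rw [setIntegral_eq_integral_of_forall_compl_eq_zero
          (fun x hx => hf0 x (fun h => hx (hcb_sub h))),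
        setIntegral_eq_integral_of_forall_compl_eq_zero hf0]
    have hfintOn : IntegrableOn f cb := by
      apply ContinuousOn.integrableOn_compact (isCompact_closedBall c r)
      apply ContinuousOn.mul
      · exact ((husmooth.continuous.abs.pow N)).continuousOn
      · exact (hρc.mono hcb_sub).rpow_const
          (fun x hx => Or.inl (hρpos x (hcb_sub hx)).ne')
    have hgintOn : IntegrableOn (fun x => |u x| ^ N * (M ^ ((N:ℝ)/2) / (4*r)^N)) cb :=
      (((husmooth.continuous.abs.pow N).mul continuous_const)).continuousOn.integrableOn_compact
        (isCompact_closedBall c r)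
    have hmono : (∫ x in cb, |u x| ^ N * (M ^ ((N:ℝ)/2) / (4*r)^N)) ≤ ∫ x in cb, f x := by
      apply setIntegral_mono_on hgintOn hfintOn measurableSet_closedBall
      intro x hx
      exact mul_le_mul_of_nonneg_left (hρpow x hx) (by positivity)
    have huint : (∫ x in cb, |u x| ^ N) = r^N * B := by
      rw [setIntegral_eq_integral_of_forall_compl_eq_zero hu0]
      rw [show (∫ x, |u x| ^ N) = ∫ x, (fun y => |φ y| ^ N) (r⁻¹ • (x - c)) from rfl]
      rw [integral_comp_aff (fun y => |φ y| ^ N) c hr0, hB]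
    have hconst : (∫ x in cb, |u x| ^ N * (M ^ ((N:ℝ)/2) / (4*r)^N))
        = M ^ ((N:ℝ)/2) * B / 4^N := by
      rw [integral_mul_const, huint]
      rw [mul_pow]
      field_simp
    set D : ℝ := M ^ ((N:ℝ)/2) * B / 4^N with hD
    have hD0 : 0 < D := by positivity
    have hden_ge : D ≤ ∫ x in unitBall N, f x := by
      rw [hden1, ← hconst] at *
      exact le_trans (le_of_eq (hconst.symm ▸ rfl)) hmono
    -- conclude
    refine ⟨A / (∫ x in unitBall N, f x), ⟨u, hutest, hune, by rw [hnum]⟩, ?_⟩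
    have hstep1 : A / (∫ x in unitBall N, f x) ≤ A / D :=
      div_le_div_of_nonneg_left hA0 hD0 hden_ge
    have hMpow : M ≤ M ^ ((N:ℝ)/2) := by
      have h1 : M ^ (1:ℝ) ≤ M ^ ((N:ℝ)/2) := by
        apply Real.rpow_le_rpow_of_exponent_le hM1
        have : (2:ℝ) ≤ N := by exact_mod_cast hN
        linarith
      rwa [Real.rpow_one] at h1
    have hstep2 : A / D ≤ (4:ℝ)^N * A / (M * B) := by
      rw [hD, div_div_eq_mul_div, div_le_div_iff₀ (by positivity) (by positivity)]
      calc A * 4^N * (M * B) ≤ A * 4^N * (M ^ ((N:ℝ)/2) * B) := by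
            apply mul_le_mul_of_nonneg_left _ (by positivity)
            exact mul_le_mul_of_nonneg_right hMpow hB0.le
        _ = 4^N * A * (M ^ ((N:ℝ)/2) * B) := by ring
    have hstep3 : (4:ℝ)^N * A / (M * B) < ε := by
      rw [div_lt_iff₀ (by positivity)]
      have := (div_lt_iff₀ (by positivity : (0:ℝ) < B * ε)).mp hMgt
      nlinarith
    calc A / (∫ x in unitBall N, f x) ≤ A / D := hstep1
      _ ≤ (4:ℝ)^N * A / (M * B) := hstep2
      _ < ε := hstep3
  -- finish
  have hSne : S.Nonempty := by
    obtain ⟨s, hs, _⟩ := key 1 one_pos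
    exact ⟨s, hs⟩
  have hbdd : BddBelow S := ⟨0, hlb⟩
  have h1 : 0 ≤ sInf S := le_csInf hSne hlb
  refine le_antisymm ?_ h1
  by_contra h
  push_neg at h
  obtain ⟨s, hsS, hslt⟩ := key (sInf S) h
  exact absurd (csInf_le hbdd hsS) (not_le.mpr hslt)
end

section
/- Let N ≥ 1, let B ⊂ ℝ^N be the open unit ball, and let a ∈ B. Define, for x with |a|²|x|² + 2⟨a,x⟩ + 1 ≠ 0, the Möbius map φ_a(x) := [ (1 − |a|²) x + (|x|² + 2⟨a,x⟩ + 1) a ] / ( |a|²|x|² + 2⟨a,x⟩ + 1 ). Then: (i) φ_a(0) = a; (ii) φ_a maps B bijectively onto B; (iii) for every R ∈ (0,1), the image φ_a(B_R(0)) equals the open ball of radius R(1 − |a|²)/(1 − R²|a|²) centered at the point ((1 − R²)/(1 − R²|a|²)) a. -/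
section MobiusAux
variable {E : Type*} [NormedAddCommGroup E] [InnerProductSpace ℝ E]

noncomputable def mobiusAux (a x : E) : E :=
  (‖a‖ ^ 2 * ‖x‖ ^ 2 + 2 * (inner ℝ a x : ℝ) + 1)⁻¹ •
    ((1 - ‖a‖ ^ 2) • x + (‖x‖ ^ 2 + 2 * (inner ℝ a x : ℝ) + 1) • a)

lemma mobiusAux_def (a x : E) : mobiusAux a x =
    (‖a‖ ^ 2 * ‖x‖ ^ 2 + 2 * (inner ℝ a x : ℝ) + 1)⁻¹ •
      ((1 - ‖a‖ ^ 2) • x + (‖x‖ ^ 2 + 2 * (inner ℝ a x : ℝ) + 1) • a) := rfl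

lemma mobius_den_pos {a x : E} (ha : ‖a‖ < 1) (hx : ‖x‖ ≤ 1) :
    0 < ‖a‖ ^ 2 * ‖x‖ ^ 2 + 2 * (inner ℝ a x : ℝ) + 1 := by
  have h := abs_real_inner_le_norm a x
  have h1 : -(‖a‖ * ‖x‖) ≤ (inner ℝ a x : ℝ) := (abs_le.mp h).1
  have hwv : ‖a‖ * ‖x‖ < 1 := by nlinarith [norm_nonneg a, norm_nonneg x]
  nlinarith [mul_pos (sub_pos.mpr hwv) (sub_pos.mpr hwv)]

lemma mobius_norm_sq {a x : E}
    (hD : (‖a‖ ^ 2 * ‖x‖ ^ 2 + 2 * (inner ℝ a x : ℝ) + 1) ≠ 0) :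
    ‖mobiusAux a x‖ ^ 2 =
      ((1 - ‖a‖ ^ 2) ^ 2 * ‖x‖ ^ 2
        + 2 * (1 - ‖a‖ ^ 2) * (‖x‖ ^ 2 + 2 * (inner ℝ a x : ℝ) + 1) * (inner ℝ a x : ℝ)
        + ‖a‖ ^ 2 * (‖x‖ ^ 2 + 2 * (inner ℝ a x : ℝ) + 1) ^ 2)
      / (‖a‖ ^ 2 * ‖x‖ ^ 2 + 2 * (inner ℝ a x : ℝ) + 1) ^ 2 := by
  rw [mobiusAux_def, norm_smul, mul_pow, norm_add_sq_real, real_inner_smul_left,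
    real_inner_smul_right, norm_smul, norm_smul, mul_pow, mul_pow]
  simp only [Real.norm_eq_abs, sq_abs, real_inner_comm x a]
  field_simp

lemma mobius_inner (a x : E) :
    (inner ℝ a (mobiusAux a x) : ℝ) =
      ((1 - ‖a‖ ^ 2) * (inner ℝ a x : ℝ) + ‖a‖ ^ 2 * (‖x‖ ^ 2 + 2 * (inner ℝ a x : ℝ) + 1))
      / (‖a‖ ^ 2 * ‖x‖ ^ 2 + 2 * (inner ℝ a x : ℝ) + 1) := by
  rw [mobiusAux_def, real_inner_smul_right, inner_add_right, real_inner_smul_right,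
    real_inner_smul_right, real_inner_self_eq_norm_sq]
  ring

lemma mobius_mem_ball {a x : E} (ha : ‖a‖ < 1) (hx : ‖x‖ < 1) :
    ‖mobiusAux a x‖ < 1 := by
  have hD : 0 < ‖a‖ ^ 2 * ‖x‖ ^ 2 + 2 * (inner ℝ a x : ℝ) + 1 := mobius_den_pos ha hx.le
  have hP := mobius_norm_sq (a := a) (x := x) hD.ne'
  have ht : ‖a‖ ^ 2 < 1 := by nlinarith [norm_nonneg a]
  have hu : ‖x‖ ^ 2 < 1 := by nlinarith [norm_nonneg x]
  have hlt : ‖mobiusAux a x‖ ^ 2 < 1 := by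
    rw [hP, div_lt_one (by positivity)]
    nlinarith [mul_pos (mul_pos (sub_pos.mpr ht) (sub_pos.mpr hu)) hD]
  nlinarith [norm_nonneg (mobiusAux a x)]

lemma mobius_inverse {a x : E} (ha : ‖a‖ < 1) (hx : ‖x‖ < 1) :
    mobiusAux (-a) (mobiusAux a x) = x := by
  have hD : 0 < ‖a‖ ^ 2 * ‖x‖ ^ 2 + 2 * (inner ℝ a x : ℝ) + 1 := mobius_den_pos ha hx.le
  have ht : ‖a‖ ^ 2 < 1 := by nlinarith [norm_nonneg a]
  have h1t : (1 : ℝ) - ‖a‖ ^ 2 ≠ 0 := by nlinarith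
  have hP := mobius_norm_sq (a := a) (x := x) hD.ne'
  have hQ := mobius_inner a x
  have hden : ‖a‖ ^ 2 *
        (((1 - ‖a‖ ^ 2) ^ 2 * ‖x‖ ^ 2
          + 2 * (1 - ‖a‖ ^ 2) * (‖x‖ ^ 2 + 2 * (inner ℝ a x : ℝ) + 1) * (inner ℝ a x : ℝ)
          + ‖a‖ ^ 2 * (‖x‖ ^ 2 + 2 * (inner ℝ a x : ℝ) + 1) ^ 2)
        / (‖a‖ ^ 2 * ‖x‖ ^ 2 + 2 * (inner ℝ a x : ℝ) + 1) ^ 2)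
      + 2 * -(((1 - ‖a‖ ^ 2) * (inner ℝ a x : ℝ)
          + ‖a‖ ^ 2 * (‖x‖ ^ 2 + 2 * (inner ℝ a x : ℝ) + 1))
        / (‖a‖ ^ 2 * ‖x‖ ^ 2 + 2 * (inner ℝ a x : ℝ) + 1)) + 1
      = (1 - ‖a‖ ^ 2) ^ 2 / (‖a‖ ^ 2 * ‖x‖ ^ 2 + 2 * (inner ℝ a x : ℝ) + 1) := by
    field_simp
    ring
  have hnum : (((1 - ‖a‖ ^ 2) ^ 2 * ‖x‖ ^ 2
          + 2 * (1 - ‖a‖ ^ 2) * (‖x‖ ^ 2 + 2 * (inner ℝ a x : ℝ) + 1) * (inner ℝ a x : ℝ)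
          + ‖a‖ ^ 2 * (‖x‖ ^ 2 + 2 * (inner ℝ a x : ℝ) + 1) ^ 2)
        / (‖a‖ ^ 2 * ‖x‖ ^ 2 + 2 * (inner ℝ a x : ℝ) + 1) ^ 2)
      + 2 * -(((1 - ‖a‖ ^ 2) * (inner ℝ a x : ℝ)
          + ‖a‖ ^ 2 * (‖x‖ ^ 2 + 2 * (inner ℝ a x : ℝ) + 1))
        / (‖a‖ ^ 2 * ‖x‖ ^ 2 + 2 * (inner ℝ a x : ℝ) + 1)) + 1
      = (1 - ‖a‖ ^ 2) * (‖x‖ ^ 2 + 2 * (inner ℝ a x : ℝ) + 1)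
        / (‖a‖ ^ 2 * ‖x‖ ^ 2 + 2 * (inner ℝ a x : ℝ) + 1) := by
    field_simp
    ring
  rw [mobiusAux_def (-a), norm_neg, inner_neg_left, hP, hQ, hden, hnum, mobiusAux_def a]
  match_scalars <;> (field_simp; try ring)
end MobiusAux

set_option maxHeartbeats 1000000 in
lemma mobius_key_scalar (t u s R : ℝ) (h1 : 0 < 1 - R ^ 2 * t) (hD : 0 < t * u + 2 * s + 1) :
    (R * (1 - t) / (1 - R ^ 2 * t)) ^ 2 -
      (((1 - t) ^ 2 * u + 2 * (1 - t) * (u + 2 * s + 1) * s + t * (u + 2 * s + 1) ^ 2)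
          / (t * u + 2 * s + 1) ^ 2
        - 2 * ((1 - R ^ 2) / (1 - R ^ 2 * t) *
            (((1 - t) * s + t * (u + 2 * s + 1)) / (t * u + 2 * s + 1)))
        + ((1 - R ^ 2) / (1 - R ^ 2 * t)) ^ 2 * t)
      = (1 - t) ^ 2 * (R ^ 2 - u) / ((1 - R ^ 2 * t) * (t * u + 2 * s + 1)) := by
  field_simp
  ring

open MeasureTheory Real

set_option maxHeartbeats 4000000 in
/-- Properties of the Möbius maps
`φ_a(x) = [(1-|a|²)x + (|x|² + 2⟨a,x⟩ + 1)a] / (|a|²|x|² + 2⟨a,x⟩ + 1)` of the unit ball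
`B ⊂ ℝ^N`: `φ_a(0) = a`; `φ_a` maps `B` bijectively onto `B`; and for `R ∈ (0,1)`,
`φ_a(B_R(0))` is the ball of radius `R(1-|a|²)/(1-R²|a|²)` centered at
`((1-R²)/(1-R²|a|²)) a`. -/
theorem mobius_map_properties (N : ℕ) (hN : 1 ≤ N)
    (a : EuclideanSpace ℝ (Fin N)) (ha : a ∈ Metric.ball (0 : EuclideanSpace ℝ (Fin N)) 1)
    (φ : EuclideanSpace ℝ (Fin N) → EuclideanSpace ℝ (Fin N))
    (hφ : ∀ x : EuclideanSpace ℝ (Fin N),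
      φ x = (‖a‖ ^ 2 * ‖x‖ ^ 2 + 2 * (inner ℝ a x : ℝ) + 1)⁻¹ •
        ((1 - ‖a‖ ^ 2) • x + (‖x‖ ^ 2 + 2 * (inner ℝ a x : ℝ) + 1) • a)) :
    φ 0 = a ∧
    Set.BijOn φ (Metric.ball 0 1) (Metric.ball 0 1) ∧
    ∀ R : ℝ, 0 < R → R < 1 →
      φ '' Metric.ball 0 R =
        Metric.ball (((1 - R ^ 2) / (1 - R ^ 2 * ‖a‖ ^ 2)) • a)
          (R * (1 - ‖a‖ ^ 2) / (1 - R ^ 2 * ‖a‖ ^ 2)) := by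
  have ha' : ‖a‖ < 1 := mem_ball_zero_iff.mp ha
  have ha'' : ‖(-a : EuclideanSpace ℝ (Fin N))‖ < 1 := by rwa [norm_neg]
  have hφa : ∀ x, φ x = mobiusAux a x := fun x => hφ x
  have ht : ‖a‖ ^ 2 < 1 := by nlinarith [norm_nonneg a]
  refine ⟨?_, ⟨?_, ?_, ?_⟩, ?_⟩
  · rw [hφ]; simp
  · -- MapsTo
    intro x hx
    rw [mem_ball_zero_iff] at hx ⊢
    rw [hφa]
    exact mobius_mem_ball ha' hx
  · -- InjOn
    intro x hx y hy hxy
    have h1 := mobius_inverse ha' (mem_ball_zero_iff.mp hx)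
    have h2 := mobius_inverse ha' (mem_ball_zero_iff.mp hy)
    rw [← hφa x] at h1
    rw [← hφa y] at h2
    rw [hxy, h2] at h1
    exact h1.symm
  · -- SurjOn
    intro y hy
    have hy' : ‖y‖ < 1 := mem_ball_zero_iff.mp hy
    refine ⟨mobiusAux (-a) y, ?_, ?_⟩
    · exact mem_ball_zero_iff.mpr (mobius_mem_ball ha'' hy')
    · rw [hφa]
      have := mobius_inverse (a := -a) ha'' hy'
      rwa [neg_neg] at this
  · -- image of small balls
    intro R hR0 hR1
    have h1 : (0:ℝ) < 1 - R ^ 2 * ‖a‖ ^ 2 := by nlinarith [norm_nonneg a]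
    have hrho0 : 0 < R * (1 - ‖a‖ ^ 2) / (1 - R ^ 2 * ‖a‖ ^ 2) := by
      apply div_pos _ h1; nlinarith
    ext y
    simp only [Set.mem_image, Metric.mem_ball, dist_eq_norm, sub_zero]
    constructor
    · rintro ⟨x, hxR, rfl⟩
      have hx1 : ‖x‖ < 1 := hxR.trans hR1
      have hD : 0 < ‖a‖ ^ 2 * ‖x‖ ^ 2 + 2 * (inner ℝ a x : ℝ) + 1 := mobius_den_pos ha' hx1.le
      have hP := mobius_norm_sq (a := a) (x := x) hD.ne'
      have hQ := (real_inner_comm a (mobiusAux a x)).trans (mobius_inner a x)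
      have hdist : ‖φ x - ((1 - R ^ 2) / (1 - R ^ 2 * ‖a‖ ^ 2)) • a‖ ^ 2
          = ‖mobiusAux a x‖ ^ 2
            - 2 * (((1 - R ^ 2) / (1 - R ^ 2 * ‖a‖ ^ 2)) * (inner ℝ (mobiusAux a x) a : ℝ))
            + ((1 - R ^ 2) / (1 - R ^ 2 * ‖a‖ ^ 2)) ^ 2 * ‖a‖ ^ 2 := by
        rw [hφa, norm_sub_sq_real, real_inner_smul_right, norm_smul, mul_pow,
          Real.norm_eq_abs, sq_abs]
      rw [hP, hQ] at hdist
      have hkey := mobius_key_scalar (‖a‖ ^ 2) (‖x‖ ^ 2) (inner ℝ a x) R h1 hD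
      rw [← hdist] at hkey
      have hpos : 0 < (R * (1 - ‖a‖ ^ 2) / (1 - R ^ 2 * ‖a‖ ^ 2)) ^ 2
          - ‖φ x - ((1 - R ^ 2) / (1 - R ^ 2 * ‖a‖ ^ 2)) • a‖ ^ 2 := by
        rw [hkey]
        apply div_pos _ (mul_pos h1 hD)
        have h2 : 0 < R ^ 2 - ‖x‖ ^ 2 := by nlinarith [norm_nonneg x]
        exact mul_pos (pow_pos (sub_pos.mpr ht) 2) h2
      nlinarith [norm_nonneg (φ x - ((1 - R ^ 2) / (1 - R ^ 2 * ‖a‖ ^ 2)) • a), hrho0]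
    · intro hy
      -- first: y is in the unit ball
      have hc : ‖((1 - R ^ 2) / (1 - R ^ 2 * ‖a‖ ^ 2)) • a‖
          = ((1 - R ^ 2) / (1 - R ^ 2 * ‖a‖ ^ 2)) * ‖a‖ := by
        rw [norm_smul, Real.norm_eq_abs, abs_of_pos (by apply div_pos _ h1; nlinarith)]
      have hsum : R * (1 - ‖a‖ ^ 2) / (1 - R ^ 2 * ‖a‖ ^ 2)
            + ((1 - R ^ 2) / (1 - R ^ 2 * ‖a‖ ^ 2)) * ‖a‖
          = (R * (1 - ‖a‖ ^ 2) + (1 - R ^ 2) * ‖a‖) / (1 - R ^ 2 * ‖a‖ ^ 2) := by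
        field_simp
      have hsum1 : R * (1 - ‖a‖ ^ 2) / (1 - R ^ 2 * ‖a‖ ^ 2)
            + ((1 - R ^ 2) / (1 - R ^ 2 * ‖a‖ ^ 2)) * ‖a‖ < 1 := by
        rw [hsum, div_lt_one h1]
        nlinarith [mul_pos (mul_pos (sub_pos.mpr hR1) (sub_pos.mpr ha'))
          (sub_pos.mpr (show R * ‖a‖ < 1 by nlinarith [norm_nonneg a]))]
      have hy1 : ‖y‖ < 1 := by
        have h7 := norm_add_le (y - ((1 - R ^ 2) / (1 - R ^ 2 * ‖a‖ ^ 2)) • a)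
          (((1 - R ^ 2) / (1 - R ^ 2 * ‖a‖ ^ 2)) • a)
        rw [sub_add_cancel, hc] at h7
        linarith
      set x := mobiusAux (-a) y with hxdef
      have hx1 : ‖x‖ < 1 := mobius_mem_ball ha'' hy1
      have hyx : mobiusAux a x = y := by
        have := mobius_inverse (a := -a) ha'' hy1
        rwa [neg_neg] at this
      refine ⟨x, ?_, by rw [hφa, hyx]⟩
      -- show ‖x‖ < R using the key identity in reverse
      have hD : 0 < ‖a‖ ^ 2 * ‖x‖ ^ 2 + 2 * (inner ℝ a x : ℝ) + 1 := mobius_den_pos ha' hx1.le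
      have hP := mobius_norm_sq (a := a) (x := x) hD.ne'
      have hQ := (real_inner_comm a (mobiusAux a x)).trans (mobius_inner a x)
      have hdist : ‖mobiusAux a x - ((1 - R ^ 2) / (1 - R ^ 2 * ‖a‖ ^ 2)) • a‖ ^ 2
          = ‖mobiusAux a x‖ ^ 2
            - 2 * (((1 - R ^ 2) / (1 - R ^ 2 * ‖a‖ ^ 2)) * (inner ℝ (mobiusAux a x) a : ℝ))
            + ((1 - R ^ 2) / (1 - R ^ 2 * ‖a‖ ^ 2)) ^ 2 * ‖a‖ ^ 2 := by
        rw [norm_sub_sq_real, real_inner_smul_right, norm_smul, mul_pow,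
          Real.norm_eq_abs, sq_abs]
      rw [hP, hQ] at hdist
      have hkey := mobius_key_scalar (‖a‖ ^ 2) (‖x‖ ^ 2) (inner ℝ a x) R h1 hD
      rw [← hdist] at hkey
      have hlt : ‖mobiusAux a x - ((1 - R ^ 2) / (1 - R ^ 2 * ‖a‖ ^ 2)) • a‖ ^ 2
          < (R * (1 - ‖a‖ ^ 2) / (1 - R ^ 2 * ‖a‖ ^ 2)) ^ 2 := by
        rw [hyx]
        nlinarith [norm_nonneg (y - ((1 - R ^ 2) / (1 - R ^ 2 * ‖a‖ ^ 2)) • a), hy, hrho0]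
      have hpos : 0 < (1 - ‖a‖ ^ 2) ^ 2 * (R ^ 2 - ‖x‖ ^ 2)
          / ((1 - R ^ 2 * ‖a‖ ^ 2) * (‖a‖ ^ 2 * ‖x‖ ^ 2 + 2 * (inner ℝ a x : ℝ) + 1)) := by
        rw [← hkey]; linarith
      have h5 : 0 < (1 - ‖a‖ ^ 2) ^ 2 * (R ^ 2 - ‖x‖ ^ 2) := by
        have h6 := mul_pos hpos (mul_pos h1 hD)
        rwa [div_mul_cancel₀ _ (mul_pos h1 hD).ne'] at h6
      by_contra h8
      push_neg at h8
      have h9 : R ^ 2 ≤ ‖x‖ ^ 2 := by nlinarith [norm_nonneg x]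
      nlinarith [h5, mul_nonneg (pow_pos (sub_pos.mpr ht) 2).le (sub_nonneg.mpr h9)]
end
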